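/- Let Σ=(Γ=(V,E),σ) be a signed graph, X a finite nonempty set, and ι an involution of X with t = |{x ∈ X : ι(x) = x}| fixed points. Then the number P_Σ(X,ι) of proper (X,ι)-colorings of Σ is given by P_Σ(X,ι) = (−1)^{|V|−k(Σ)} · |X|^{k(Σ)} · T_Σ(1−|X|, 0, 1−t/|X|). -/

import Mathlib

attribute [local instance] Classical.propDecidable

noncomputable section SignedGraphs

/-- A signed graph: a multigraph with ordered pairs of endpoints (the order is
an artefact of the encoding) together with a sign `±1` on each edge. -/
structure SGraph (V : Type*) (E : Type*) where
  ends : E → V × V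
  sign : E → ℤˣ

namespace SGraph

variable {V E : Type*}

/-- Endpoint of `e` on side `b`; a loop has both endpoints equal, but its two
half-edges are distinguished by the side `b`. -/
def endpt (Γ : SGraph V E) (e : E) (b : Bool) : V :=
  cond b (Γ.ends e).1 (Γ.ends e).2

/-- `e` is a loop of the underlying graph. -/
def IsLoop (Γ : SGraph V E) (e : E) : Prop := (Γ.ends e).1 = (Γ.ends e).2

/-- Walks in a signed multigraph: a step traverses an edge `e` in direction `d`
(from the side-`d` endpoint to the other endpoint). -/
inductive Walk (Γ : SGraph V E) : V → V → Type _
  | nil (v : V) : Walk Γ v v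
  | cons (e : E) (d : Bool) {w : V} (p : Walk Γ (Γ.endpt e (!d)) w) : Walk Γ (Γ.endpt e d) w

namespace Walk

variable {Γ : SGraph V E}

/-- The list of vertices visited by a walk (including the final one). -/
def verts : ∀ {u v : V}, Γ.Walk u v → List V
  | _, _, .nil x => [x]
  | _, _, .cons e d p => Γ.endpt e d :: p.verts

/-- The list of edges traversed by a walk. -/
def edges : ∀ {u v : V}, Γ.Walk u v → List E
  | _, _, .nil _ => []
  | _, _, .cons e _ p => e :: p.edges

/-- The list of (edge, direction) steps of a walk. -/
def steps : ∀ {u v : V}, Γ.Walk u v → List (E × Bool)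
  | _, _, .nil _ => []
  | _, _, .cons e d p => (e, d) :: p.steps

/-- The sources of the steps of a walk, i.e. all visited vertices except the last. -/
def srcs {u v : V} (W : Γ.Walk u v) : List V := W.verts.dropLast

/-- The sign of a walk: the product of the signs of its edges. -/
def sgn : ∀ {u v : V}, Γ.Walk u v → ℤˣ
  | _, _, .nil _ => 1
  | _, _, .cons e _ p => Γ.sign e * p.sgn

/-- Concatenation of walks. -/
def append : ∀ {u v w : V}, Γ.Walk u v → Γ.Walk v w → Γ.Walk u w
  | _, _, _, .nil _, q => q
  | _, _, _, .cons e d p, q => .cons e d (p.append q)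

/-- The sum `Σᵢ f(eᵢ)` of the values of `f` on the edges of the walk,
with multiplicity. -/
def edgeSum {G : Type*} [AddCommGroup G] (f : E → G) {u v : V} (W : Γ.Walk u v) : G :=
  (W.edges.map f).sum

/-- The sum `Σᵢ ω(vᵢ,eᵢ)·(Π_{j<i} σ(eⱼ))·f(eᵢ)` along a walk, where `ω(vᵢ,eᵢ)`
is the value of `ω` on the half-edge by which the walk leaves `vᵢ`. -/
def tensionSum {G : Type*} [AddCommGroup G] (ω : E → Bool → ℤˣ) (f : E → G) :
    ∀ {u v : V}, Γ.Walk u v → G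
  | _, _, .nil _ => 0
  | _, _, .cons e d p => ((ω e d : ℤ) • f e) + ((Γ.sign e : ℤ) • tensionSum ω f p)

/-- `Q` is the reverse of the walk `P`. -/
def IsReverseOf {u v : V} (Q : Γ.Walk v u) (P : Γ.Walk u v) : Prop :=
  Q.steps = P.steps.reverse.map fun s => (s.1, !s.2)

end Walk

/-- A closed walk is a cycle if it is nontrivial, visits no vertex twice and
uses no edge twice. -/
def IsCycle (Γ : SGraph V E) {v : V} (W : Γ.Walk v v) : Prop :=
  W.edges ≠ [] ∧ W.srcs.Nodup ∧ W.edges.Nodup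

/-- A balanced (positive) cycle. -/
def IsBalancedCycle (Γ : SGraph V E) {v : V} (W : Γ.Walk v v) : Prop :=
  Γ.IsCycle W ∧ W.sgn = 1

/-- An unbalanced (negative) cycle. -/
def IsUnbalancedCycle (Γ : SGraph V E) {v : V} (W : Γ.Walk v v) : Prop :=
  Γ.IsCycle W ∧ W.sgn = -1

/-- A nontrivial walk that is a simple path (all visited vertices distinct). -/
def IsPathWalk (Γ : SGraph V E) {u v : V} (P : Γ.Walk u v) : Prop :=
  P.edges ≠ [] ∧ P.verts.Nodup

/-- A tight handcuff at `v`: two edge-disjoint unbalanced cycles sharing exactly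
the vertex `v`. -/
def IsTightHandcuff (Γ : SGraph V E) {v : V} (C₁ C₂ : Γ.Walk v v) : Prop :=
  Γ.IsUnbalancedCycle C₁ ∧ Γ.IsUnbalancedCycle C₂ ∧
    (∀ x ∈ C₁.srcs, x ∈ C₂.srcs → x = v) ∧ ∀ e ∈ C₁.edges, e ∉ C₂.edges

/-- A loose handcuff: two vertex-disjoint unbalanced cycles `C₁` (at `u`) and
`C₂` (at `w`) joined by a simple path `P` from `u` to `w` meeting the cycles
exactly in its endpoints. -/
def IsLooseHandcuff (Γ : SGraph V E) {u w : V} (C₁ : Γ.Walk u u) (P : Γ.Walk u w)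
    (C₂ : Γ.Walk w w) : Prop :=
  Γ.IsUnbalancedCycle C₁ ∧ Γ.IsUnbalancedCycle C₂ ∧ Γ.IsPathWalk P ∧
    (∀ x ∈ C₁.srcs, x ∉ C₂.srcs) ∧
    (∀ x ∈ P.verts, x ∈ C₁.srcs → x = u) ∧
    (∀ x ∈ P.verts, x ∈ C₂.srcs → x = w) ∧
    ∀ e ∈ P.edges, e ∉ C₁.edges ∧ e ∉ C₂.edges

/-- The canonical closed walks traversing a circuit of the signed graph:
a balanced cycle, a tight handcuff `C₁ * C₂`, or a loose handcuff
`C₁ * P * C₂ * P⁻¹` (the circuit path edges being used twice). -/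
def IsBasicCircuitWalk (Γ : SGraph V E) {v : V} (W : Γ.Walk v v) : Prop :=
  Γ.IsBalancedCycle W ∨
    (∃ C₁ C₂ : Γ.Walk v v, Γ.IsTightHandcuff C₁ C₂ ∧ W = C₁.append C₂) ∨
    ∃ (w : V) (C₁ : Γ.Walk v v) (P : Γ.Walk v w) (C₂ : Γ.Walk w w) (Q : Γ.Walk w v),
      Γ.IsLooseHandcuff C₁ P C₂ ∧ Q.IsReverseOf P ∧
        W = C₁.append (P.append (C₂.append Q))

/-- A circuit walk: a rotation of a basic circuit walk. -/
def IsCircuitWalk (Γ : SGraph V E) {v : V} (W : Γ.Walk v v) : Prop :=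
  ∃ (u : V) (A : Γ.Walk u v) (B : Γ.Walk v u),
    W = B.append A ∧ Γ.IsBasicCircuitWalk (A.append B)

/-- `e` is a circuit path edge: it lies on the connecting path of an unbalanced
loose handcuff. -/
def IsCircuitPathEdge (Γ : SGraph V E) (e : E) : Prop :=
  ∃ (u w : V) (C₁ : Γ.Walk u u) (P : Γ.Walk u w) (C₂ : Γ.Walk w w),
    Γ.IsLooseHandcuff C₁ P C₂ ∧ e ∈ P.edges

/-- Adjacency via an edge. -/
def Adj (Γ : SGraph V E) (a b : V) : Prop := ∃ e, Γ.ends e = (a, b) ∨ Γ.ends e = (b, a)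

/-- The set of connected components. -/
def Components (Γ : SGraph V E) : Type _ := Quot Γ.Adj

/-- The connected component of a vertex. -/
def comp (Γ : SGraph V E) (v : V) : Γ.Components := Quot.mk _ v

/-- The number `k(Γ)` of connected components. -/
def kAll (Γ : SGraph V E) : ℕ := Nat.card Γ.Components

/-- A connected component is balanced if every cycle it contains is balanced. -/
def IsBalancedComponent (Γ : SGraph V E) (c : Γ.Components) : Prop :=
  ∀ v : V, Γ.comp v = c → ∀ W : Γ.Walk v v, Γ.IsCycle W → W.sgn = 1

/-- The number `k_b(Σ)` of balanced connected components. -/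
def kb (Γ : SGraph V E) : ℕ := Nat.card {c : Γ.Components // Γ.IsBalancedComponent c}

/-- The number `k_u(Σ)` of unbalanced connected components. -/
def ku (Γ : SGraph V E) : ℕ := Nat.card {c : Γ.Components // ¬ Γ.IsBalancedComponent c}

/-- A signed graph is balanced if all its cycles are balanced. -/
def Balanced (Γ : SGraph V E) : Prop :=
  ∀ (v : V) (W : Γ.Walk v v), Γ.IsCycle W → W.sgn = 1

/-- A signed graph is connected if it has exactly one connected component. -/
def Connected (Γ : SGraph V E) : Prop := Γ.kAll = 1

/-- The spanning subgraph `Σ \ Aᶜ` with edge set `A`. -/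
def restrict (Γ : SGraph V E) (A : Set E) : SGraph V A :=
  { ends := fun e => Γ.ends e, sign := fun e => Γ.sign e }

/-- The signed Tutte polynomial (as a function of `x`, `y`, `z`):
`T_Σ(X,Y,Z) = Σ_{A⊆E} (X−1)^{k(Σ\Aᶜ)−k(Σ)} (Y−1)^{|A|−|V|+k_b(Σ\Aᶜ)} (Z−1)^{k_u(Σ\Aᶜ)}`. -/
def signedTutte {K : Type*} [CommRing K] (Γ : SGraph V E) (x y z : K) : K :=
  ∑ᶠ A : Finset E,
    (x - 1) ^ ((Γ.restrict (A : Set E)).kAll - Γ.kAll) *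
      (y - 1) ^ ((A.card + (Γ.restrict (A : Set E)).kb) - Nat.card V) *
        (z - 1) ^ (Γ.restrict (A : Set E)).ku

/-- Deletion of an edge. -/
def deleteEdge (Γ : SGraph V E) (e : E) : SGraph V {e' : E // e' ≠ e} :=
  { ends := fun e' => Γ.ends e'.1, sign := fun e' => Γ.sign e'.1 }

/-- The relation identifying the two endpoints of `e`. -/
def contractRel (Γ : SGraph V E) (e : E) (a b : V) : Prop := (a, b) = Γ.ends e

/-- Contraction of an edge: the two endpoints are identified and the edge is
deleted.  (For a loop this is just deletion, as the identification is trivial.) -/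
def contract (Γ : SGraph V E) (e : E) : SGraph (Quot (Γ.contractRel e)) {e' : E // e' ≠ e} :=
  { ends := fun e' => (Quot.mk _ (Γ.ends e'.1).1, Quot.mk _ (Γ.ends e'.1).2),
    sign := fun e' => Γ.sign e'.1 }

/-- `e` is a bridge: its deletion increases the number of connected components. -/
def IsBridge (Γ : SGraph V E) (e : E) : Prop := Γ.kAll < (Γ.deleteEdge e).kAll

/-- An orientation of the half-edges, compatible with the signature. -/
def IsCompatible (Γ : SGraph V E) (ω : E → Bool → ℤˣ) : Prop :=
  ∀ e, Γ.sign e = -(ω e true * ω e false)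

/-- A `G`-flow: Kirchhoff's law holds at every vertex. -/
def IsFlow (Γ : SGraph V E) (ω : E → Bool → ℤˣ) {G : Type*} [AddCommGroup G]
    (f : E → G) : Prop :=
  ∀ v : V,
    (∑ᶠ e : E, ((if Γ.endpt e true = v then (ω e true : ℤ) • f e else 0) +
      (if Γ.endpt e false = v then (ω e false : ℤ) • f e else 0))) = 0

/-- A `G`-tension: the alternating sum along every circuit walk vanishes. -/
def IsTension (Γ : SGraph V E) (ω : E → Bool → ℤˣ) {G : Type*} [AddCommGroup G]
    (f : E → G) : Prop :=
  ∀ (v : V) (W : Γ.Walk v v), Γ.IsCircuitWalk W → W.tensionSum ω f = 0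

end SGraph

/-- The doubling homomorphism `x ↦ x + x = 2x` of an abelian group. -/
def doubleHom (G : Type*) [AddCommGroup G] : G →+ G :=
  AddMonoidHom.mk' (fun x => x + x) (fun a b => add_add_add_comm a b a b)

/-- The subgroup `2G = {2x : x ∈ G}`. -/
def twoG (G : Type*) [AddCommGroup G] : AddSubgroup G := (doubleHom G).range

/-- The `2`-torsion subgroup `G₂ = {x ∈ G : 2x = 0}`. -/
def torsion2 (G : Type*) [AddCommGroup G] : AddSubgroup G := (doubleHom G).ker

namespace SGraph

variable {V E : Type*}

/-- A `G`-potential difference: a `G`-tension whose sum around every unbalanced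
cycle lies in `2G`. -/
def IsPotentialDifference (Γ : SGraph V E) (ω : E → Bool → ℤˣ) {G : Type*} [AddCommGroup G]
    (f : E → G) : Prop :=
  Γ.IsTension ω f ∧
    ∀ (v : V) (W : Γ.Walk v v), Γ.IsUnbalancedCycle W → W.edgeSum f ∈ twoG G

end SGraph

namespace SGraph

variable {V E : Type*}

/-- Proper coloring by elements of a set `X` with involution `ι`: adjacent
endpoints of a positive edge get different colors, and for a negative edge the
`ι`-image of one endpoint's color differs from the other endpoint's color. -/
def IsProperInvColoring (Γ : SGraph V E) {X : Type*} (ι : X → X) (f : V → X) : Prop :=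
  ∀ e : E, (Γ.sign e = 1 → f ((Γ.ends e).1) ≠ f ((Γ.ends e).2)) ∧
    (Γ.sign e = -1 → ι (f ((Γ.ends e).1)) ≠ f ((Γ.ends e).2))

/-- A proper `G`-coloring: for every edge `e = uv`, `f(u) ≠ f(v)` if `e` is
positive and `-f(u) ≠ f(v)` if `e` is negative, i.e. `σ(e)•f(u) ≠ f(v)`. -/
def IsProperColoring (Γ : SGraph V E) {G : Type*} [AddCommGroup G] (f : V → G) : Prop :=
  ∀ e : E, ((Γ.sign e : ℤ) • f ((Γ.ends e).1)) ≠ f ((Γ.ends e).2)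

/-- Zaslavsky's proper `n`-coloring: colors in `{0, ±1, …, ±n}` with
`f(u) ≠ σ(e)·f(v)` for every edge `e = uv`. -/
def IsProperNColoring (Γ : SGraph V E) (n : ℕ) (f : V → ℤ) : Prop :=
  (∀ v, |f v| ≤ (n : ℤ)) ∧
    ∀ e : E, f ((Γ.ends e).1) ≠ (Γ.sign e : ℤ) * f ((Γ.ends e).2)

/-- `T ⊆ E` is a spanning tree: the spanning subgraph `(V,T)` is connected and
contains no cycle. -/
def IsSpanningTree (Γ : SGraph V E) (T : Set E) : Prop :=
  (Γ.restrict T).Connected ∧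
    ∀ (v : V) (W : (Γ.restrict T).Walk v v), ¬ (Γ.restrict T).IsCycle W

/-- A connected basis of a connected signed graph: a spanning tree if `Σ` is
balanced; otherwise a spanning tree plus one extra edge closing an unbalanced
cycle. -/
def IsConnectedBasis (Γ : SGraph V E) (B : Set E) : Prop :=
  (Γ.Balanced ∧ Γ.IsSpanningTree B) ∨
    (¬ Γ.Balanced ∧ ∃ (T : Set E) (e : E), Γ.IsSpanningTree T ∧ e ∉ T ∧ B = insert e T ∧
      ∀ (v : V) (W : (Γ.restrict B).Walk v v), (Γ.restrict B).IsCycle W → W.sgn = -1)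

/-- Switching at a vertex `v`: the sign of every non-loop edge incident with `v`
is negated; loops keep their sign. -/
def switchAt (Γ : SGraph V E) (v : V) : SGraph V E :=
  { ends := Γ.ends,
    sign := fun e => if ((Γ.ends e).1 = v ↔ (Γ.ends e).2 = v) then Γ.sign e else -Γ.sign e }

/-- Switching at a set `S` of vertices (the composite of the switchings at the
vertices of `S`): the sign of an edge is negated iff exactly one of its
endpoints lies in `S`. -/
def switchSet (Γ : SGraph V E) (S : Set V) : SGraph V E :=
  { ends := Γ.ends,
    sign := fun e => if ((Γ.ends e).1 ∈ S ↔ (Γ.ends e).2 ∈ S) then Γ.sign e else -Γ.sign e }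

/-- Isomorphism of signed graphs (as undirected signed multigraphs). -/
def Iso {V₁ E₁ V₂ E₂ : Type*} (Γ₁ : SGraph V₁ E₁) (Γ₂ : SGraph V₂ E₂) : Prop :=
  ∃ (φ : V₁ ≃ V₂) (ψ : E₁ ≃ E₂), ∀ e : E₁,
    (Γ₂.ends (ψ e) = (φ (Γ₁.ends e).1, φ (Γ₁.ends e).2) ∨
      Γ₂.ends (ψ e) = (φ (Γ₁.ends e).2, φ (Γ₁.ends e).1)) ∧
    Γ₂.sign (ψ e) = Γ₁.sign e

/-- Switching equivalence: isomorphism after switching at a set of vertices. -/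
def SwitchEquiv {V₁ E₁ V₂ E₂ : Type*} (Γ₁ : SGraph V₁ E₁) (Γ₂ : SGraph V₂ E₂) : Prop :=
  ∃ S : Set V₁, Iso (Γ₁.switchSet S) Γ₂

/-- Disjoint union of signed graphs. -/
def disjUnion {V₁ E₁ V₂ E₂ : Type*} (Γ₁ : SGraph V₁ E₁) (Γ₂ : SGraph V₂ E₂) :
    SGraph (V₁ ⊕ V₂) (E₁ ⊕ E₂) where
  ends := fun e => match e with
    | .inl e => (Sum.inl (Γ₁.ends e).1, Sum.inl (Γ₁.ends e).2)
    | .inr e => (Sum.inr (Γ₂.ends e).1, Sum.inr (Γ₂.ends e).2)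
  sign := fun e => match e with
    | .inl e => Γ₁.sign e
    | .inr e => Γ₂.sign e

/-- The difference operator `δ : G^V → G^E`,
`(δg)(e) = ω(v,e)·g(v) + ω(u,e)·g(u)` for `e = uv`. -/
def deltaHom (Γ : SGraph V E) (ω : E → Bool → ℤˣ) (G : Type*) [AddCommGroup G] :
    (V → G) →+ (E → G) :=
  AddMonoidHom.mk'
    (fun g e => (ω e true : ℤ) • g ((Γ.ends e).1) + (ω e false : ℤ) • g ((Γ.ends e).2))
    (by
      intro a b
      funext e
      simp only [Pi.add_apply, smul_add]
      abel)

end SGraph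

end SignedGraphs

noncomputable section MyAux

theorem aux_map_not_nodup {α β : Type*} {f : α → β} : ∀ {l : List α}, ¬ (l.map f).Nodup →
    ∃ a b l₁ l₂ l₃, l = l₁ ++ (a :: (l₂ ++ (b :: l₃))) ∧ f a = f b
  | [], h => absurd (by simp) h
  | x :: t, h => by
    by_cases hx : f x ∈ t.map f
    · rcases List.mem_map.1 hx with ⟨b, hb, hfb⟩
      rcases List.append_of_mem hb with ⟨l₂, l₃, rfl⟩
      exact ⟨x, b, [], l₂, l₃, by simp, hfb.symm⟩
    · have h' : ¬ (t.map f).Nodup := fun hn => h (by simp [List.nodup_cons, hx, hn])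
      rcases aux_map_not_nodup h' with ⟨a, b, l₁, l₂, l₃, rfl, hab⟩
      exact ⟨a, b, x :: l₁, l₂, l₃, rfl, hab⟩

namespace SGraph

variable {V E : Type*} {Γ : SGraph V E}

namespace Walk

/-- Transport a walk along equalities of its endpoints. -/
def copy {u v u' v'} (W : Γ.Walk u v) (h1 : u = u') (h2 : v = v') : Γ.Walk u' v' :=
  h2 ▸ h1 ▸ W

@[simp] theorem steps_copy {u v u' v'} (W : Γ.Walk u v) (h1 : u = u') (h2 : v = v') :
    (W.copy h1 h2).steps = W.steps := by subst h1; subst h2; rfl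

@[simp] theorem sgn_copy {u v u' v'} (W : Γ.Walk u v) (h1 : u = u') (h2 : v = v') :
    (W.copy h1 h2).sgn = W.sgn := by subst h1; subst h2; rfl

@[simp] theorem verts_copy {u v u' v'} (W : Γ.Walk u v) (h1 : u = u') (h2 : v = v') :
    (W.copy h1 h2).verts = W.verts := by subst h1; subst h2; rfl

@[simp] theorem edges_copy {u v u' v'} (W : Γ.Walk u v) (h1 : u = u') (h2 : v = v') :
    (W.copy h1 h2).edges = W.edges := by subst h1; subst h2; rfl

theorem edges_eq_steps {u v} (W : Γ.Walk u v) : W.edges = W.steps.map Prod.fst := by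
  induction W with
  | nil => rfl
  | cons e d p ih => simp [edges, steps, ih]

theorem verts_eq_steps {u v} (W : Γ.Walk u v) :
    W.verts = W.steps.map (fun s => Γ.endpt s.1 s.2) ++ [v] := by
  induction W with
  | nil => rfl
  | cons e d p ih => simp [verts, steps, ih]

theorem srcs_eq_steps {u v} (W : Γ.Walk u v) :
    W.srcs = W.steps.map (fun s => Γ.endpt s.1 s.2) := by
  rw [srcs, verts_eq_steps]
  simp

theorem sgn_eq_steps {u v} (W : Γ.Walk u v) :
    W.sgn = (W.steps.map (fun s => Γ.sign s.1)).prod := by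
  induction W with
  | nil => rfl
  | cons e d p ih => simp [sgn, steps, ih]

@[simp] theorem steps_append {u v w} (P : Γ.Walk u v) (Q : Γ.Walk v w) :
    (P.append Q).steps = P.steps ++ Q.steps := by
  induction P with
  | nil => rfl
  | cons e d p ih => simp [append, steps, ih]

theorem sgn_append {u v w} (P : Γ.Walk u v) (Q : Γ.Walk v w) :
    (P.append Q).sgn = P.sgn * Q.sgn := by
  simp [sgn_eq_steps, steps_append]

theorem eq_src_of_steps {u v} (W : Γ.Walk u v) {e : E} {d : Bool} {l : List (E × Bool)}
    (h : W.steps = (e, d) :: l) : u = Γ.endpt e d := by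
  cases W with
  | nil => simp [steps] at h
  | cons e' d' p =>
    rw [steps] at h
    obtain ⟨h1, -⟩ := List.cons.injEq _ _ _ _ ▸ h
    obtain ⟨rfl, rfl⟩ := Prod.mk.injEq _ _ _ _ ▸ h1
    rfl

theorem split_steps : ∀ {u v : V} (W : Γ.Walk u v) (l₁ l₂ : List (E × Bool)),
    W.steps = l₁ ++ l₂ →
    ∃ (w : V) (A : Γ.Walk u w) (B : Γ.Walk w v), A.steps = l₁ ∧ B.steps = l₂ := by
  intro u v W l₁
  induction l₁ generalizing u W with
  | nil => exact fun l₂ h => ⟨u, .nil u, W, rfl, by simpa using h⟩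
  | cons s l₁ ih =>
    intro l₂ h
    cases W with
    | nil => simp [steps] at h
    | cons e d p =>
      rw [steps, List.cons_append] at h
      obtain ⟨h1, h2⟩ := List.cons.injEq _ _ _ _ ▸ h
      rcases ih p l₂ h2 with ⟨w, A, B, hA, hB⟩
      exact ⟨w, .cons e d A, B, by simp [steps, hA, h1], hB⟩

theorem exists_reverse : ∀ {u v : V} (W : Γ.Walk u v), ∃ W' : Γ.Walk v u, W'.sgn = W.sgn := by
  intro u v W
  induction W with
  | nil v => exact ⟨.nil v, rfl⟩
  | cons e d p ih =>
    rcases ih with ⟨q, hq⟩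
    refine ⟨q.append ((Walk.cons e (!d) (.nil _)).copy rfl (by rw [Bool.not_not])), ?_⟩
    rw [sgn_append, sgn_copy]
    simp [sgn, hq, mul_comm]

end Walk

theorem comp_eq_of_walk {u v : V} (W : Γ.Walk u v) : Γ.comp u = Γ.comp v := by
  induction W with
  | nil => rfl
  | cons e d p ih =>
    refine Eq.trans ?_ ih
    refine Quot.sound ⟨e, ?_⟩
    cases d
    · exact Or.inr rfl
    · exact Or.inl rfl

theorem nonempty_walk_of_comp_eq {u v : V} (h : Γ.comp u = Γ.comp v) :
    Nonempty (Γ.Walk u v) := by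
  rw [comp, comp] at h
  replace h := Quot.eq.1 h
  induction h with
  | rel a b hab =>
    rcases hab with ⟨e, he | he⟩
    · exact ⟨(Walk.cons e true (.nil _)).copy (by simp [endpt, he]) (by simp [endpt, he])⟩
    · exact ⟨(Walk.cons e false (.nil _)).copy (by simp [endpt, he]) (by simp [endpt, he])⟩
  | refl a => exact ⟨.nil a⟩
  | symm a b h ih =>
    rcases ih with ⟨W⟩
    rcases Walk.exists_reverse W with ⟨W', -⟩
    exact ⟨W'⟩
  | trans a b c _ _ ih1 ih2 => exact ⟨ih1.some.append ih2.some⟩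

end SGraph
end MyAux
namespace SGraph
variable {V E : Type*} {Γ : SGraph V E}


theorem exists_unbalanced_cycle :
    ∀ (n : ℕ) {v : V} (W : Γ.Walk v v), W.steps.length ≤ n → W.sgn ≠ 1 →
      ∃ (w : V) (C : Γ.Walk w w), Γ.IsCycle C ∧ C.sgn ≠ 1 ∧ Γ.comp v = Γ.comp w := by
  intro n
  induction n with
  | zero =>
    intro v W hlen hsgn
    refine absurd ?_ hsgn
    rw [Walk.sgn_eq_steps, List.length_eq_zero_iff.1 (Nat.le_zero.1 hlen)]
    rfl
  | succ n ih =>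
    intro v W hlen hsgn
    by_cases hs : W.srcs.Nodup
    · by_cases he : W.edges.Nodup
      · refine ⟨v, W, ⟨?_, hs, he⟩, hsgn, rfl⟩
        intro h0
        apply hsgn
        rw [Walk.sgn_eq_steps]
        have h1 : W.steps = [] := by
          have := W.edges_eq_steps ▸ h0
          simpa using this
        rw [h1]; rfl
      · -- duplicate edge, srcs nodup
        rw [Walk.edges_eq_steps] at he
        obtain ⟨a, b, s₁, s₂, s₃, hsteps, hab⟩ := aux_map_not_nodup he
        obtain ⟨ea, da⟩ := a
        obtain ⟨eb, db⟩ := b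
        simp only at hab
        subst hab
        -- srcs distinct
        have hsrc : Γ.endpt ea da ≠ Γ.endpt ea db := by
          have hnd := hs
          rw [Walk.srcs_eq_steps, hsteps] at hnd
          rw [List.map_append, List.map_cons, List.map_append, List.map_cons] at hnd
          have h2 := hnd.of_append_right
          have h3 := (List.nodup_cons.1 h2).1
          intro heq
          exact h3 (by rw [heq]; exact List.mem_append_right _ List.mem_cons_self)
        have hdb : db = !da := by
          cases da <;> cases db <;> simp_all
        subst hdb
        obtain ⟨w₁, A, M, hA, hM⟩ := W.split_steps s₁ _ hsteps
        cases M with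
        | nil => simp [Walk.steps] at hM
        | cons e' d' p =>
          rw [Walk.steps] at hM
          injection hM with h1 h2
          injection h1 with h1a h1b
          have h1a' := h1a.symm; subst h1a'
          have h1b' := h1b.symm; subst h1b'
          obtain ⟨w₂, B, C, hB, hC⟩ := p.split_steps s₂ _ h2
          have hw₂ : w₂ = Γ.endpt ea (!da) := C.eq_src_of_steps hC
          have hB' : (B.copy rfl hw₂) = B.copy rfl hw₂ := rfl
          set B' : Γ.Walk (Γ.endpt ea (!da)) (Γ.endpt ea (!da)) := B.copy rfl hw₂ with hB'def
          cases C with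
          | nil => simp [Walk.steps] at hC
          | cons e'' d'' r =>
            rw [Walk.steps] at hC
            injection hC with h3 h4
            injection h3 with h3a h3b
            have h3a' := h3a.symm; subst h3a'
            have h3b' := h3b.symm; subst h3b'
            have hr : Γ.endpt ea (!(!da)) = Γ.endpt ea da := by rw [Bool.not_not]
            set D : Γ.Walk v v := A.append ((r.copy hr rfl)) with hD
            have hlenW : W.steps.length = s₁.length + 1 + s₂.length + 1 + s₃.length := by
              rw [hsteps]; simp; omega
            have hDsteps : D.steps = s₁ ++ s₃ := by
              rw [hD, Walk.steps_append, hA, Walk.steps_copy, h4]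
            have hWD : W.sgn = B'.sgn * D.sgn := by
              rw [Walk.sgn_eq_steps, hsteps, Walk.sgn_eq_steps, Walk.sgn_eq_steps, hDsteps,
                hB'def, Walk.steps_copy, hB]
              simp only [List.map_append, List.map_cons, List.prod_append, List.prod_cons]
              obtain hg | hg := Int.units_eq_one_or (Γ.sign ea) <;>
                rw [hg] <;>
                simp [mul_comm, mul_assoc, mul_left_comm]
            by_cases hBs : B'.sgn = 1
            · have hDs : D.sgn ≠ 1 := by
                rw [hWD, hBs, one_mul] at hsgn; exact hsgn
              refine ih D ?_ hDs
              rw [hDsteps] at *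
              simp only [List.length_append]
              omega
            · obtain ⟨w, Cyc, hc, hns, hcomp⟩ := ih B' (by
                rw [hB'def, Walk.steps_copy, hB]
                omega) hBs
              refine ⟨w, Cyc, hc, hns, ?_⟩
              refine Eq.trans ?_ hcomp
              have hw : Γ.comp v = Γ.comp (Γ.endpt ea da) := comp_eq_of_walk A
              refine hw.trans (comp_eq_of_walk (Walk.cons ea da (Walk.nil _)))
    · -- duplicate source
      rw [Walk.srcs_eq_steps] at hs
      obtain ⟨a, b, s₁, s₂, s₃, hsteps, hab⟩ := aux_map_not_nodup hs
      obtain ⟨ea, da⟩ := a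
      obtain ⟨eb, db⟩ := b
      simp only at hab
      obtain ⟨w₁, A, M, hA, hM⟩ := W.split_steps s₁ _ hsteps
      obtain ⟨w₂, B, C, hB, hC⟩ := M.split_steps ((ea, da) :: s₂) ((eb, db) :: s₃) (by rw [hM]; simp)
      have hw₁ : w₁ = Γ.endpt ea da := B.eq_src_of_steps hB
      have hw₂ : w₂ = Γ.endpt eb db := C.eq_src_of_steps hC
      have hww : w₂ = w₁ := by rw [hw₁, hw₂, ← hab]
      set B' : Γ.Walk w₁ w₁ := B.copy rfl hww with hB'def
      set D : Γ.Walk v v := A.append (C.copy hww rfl) with hD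
      have hDsteps : D.steps = s₁ ++ (eb, db) :: s₃ := by
        rw [hD, Walk.steps_append, hA, Walk.steps_copy, hC]
      have hlenW : W.steps.length = s₁.length + 1 + s₂.length + 1 + s₃.length := by
        rw [hsteps]; simp; omega
      have hWD : W.sgn = B'.sgn * D.sgn := by
        rw [Walk.sgn_eq_steps, hsteps, Walk.sgn_eq_steps, Walk.sgn_eq_steps, hDsteps,
          hB'def, Walk.steps_copy, hB]
        simp only [List.map_append, List.map_cons, List.prod_append, List.prod_cons]
        simp [mul_comm, mul_assoc, mul_left_comm]
      by_cases hBs : B'.sgn = 1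
      · have hDs : D.sgn ≠ 1 := by rw [hWD, hBs, one_mul] at hsgn; exact hsgn
        refine ih D ?_ hDs
        rw [hDsteps]
        simp only [List.length_append, List.length_cons]
        omega
      · obtain ⟨w, Cyc, hc, hns, hcomp⟩ := ih B' (by
          rw [hB'def, Walk.steps_copy, hB]
          simp only [List.length_cons]
          omega) hBs
        exact ⟨w, Cyc, hc, hns, (comp_eq_of_walk A).trans hcomp⟩

theorem sgn_eq_one_of_balanced {v : V} (hb : Γ.IsBalancedComponent (Γ.comp v))
    (W : Γ.Walk v v) : W.sgn = 1 := by
  by_contra h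
  obtain ⟨w, C, hC, hsgn, hcomp⟩ := exists_unbalanced_cycle W.steps.length W le_rfl h
  exact hsgn (hb w hcomp.symm C hC)

end SGraph
namespace SGraph
variable {V E : Type*} {Γ : SGraph V E}

instance instFiniteComponents [Finite V] (Γ : SGraph V E) : Finite Γ.Components :=
  Finite.of_surjective Γ.comp (fun q => Quot.exists_rep q)

theorem units_neg_one_ne_one : (-1 : ℤˣ) ≠ 1 := by
  intro h
  have := congrArg Units.val h
  norm_num at this

theorem units_eq_of_mul_eq_one {u w : ℤˣ} (h : u * w = 1) : w = u := by
  calc w = (u * u) * w := by rw [Int.units_mul_self, one_mul]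
    _ = u * (u * w) := by rw [mul_assoc]
    _ = u := by rw [h, mul_one]

/-- `e` is monochromatic for `f` (the negation of the proper-coloring condition). -/
def Mono (Γ : SGraph V E) {X : Type*} (ι : X → X) (e : E) (f : V → X) : Prop :=
  (Γ.sign e = 1 ∧ f (Γ.ends e).1 = f (Γ.ends e).2) ∨
    (Γ.sign e = -1 ∧ ι (f (Γ.ends e).1) = f (Γ.ends e).2)

theorem mono_step {X : Type*} {ι : X → X} {f : V → X} (hι : ∀ x, ι (ι x) = x)
    {e : E} (h : Γ.Mono ι e f) (d : Bool) :
    f (Γ.endpt e (!d)) = if Γ.sign e = 1 then f (Γ.endpt e d) else ι (f (Γ.endpt e d)) := by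
  rcases h with ⟨hs, hf⟩ | ⟨hs, hf⟩
  · rw [hs, if_pos rfl]
    cases d
    · exact hf
    · exact hf.symm
  · rw [hs, if_neg units_neg_one_ne_one]
    cases d
    · show f (Γ.ends e).1 = ι (f (Γ.ends e).2)
      rw [← hf, hι]
    · exact hf.symm

theorem walk_mono {X : Type*} {ι : X → X} {f : V → X} (hι : ∀ x, ι (ι x) = x)
    (hf : ∀ e, Γ.Mono ι e f) {u v : V} (W : Γ.Walk u v) :
    f v = if W.sgn = 1 then f u else ι (f u) := by
  induction W with
  | nil => simp [Walk.sgn]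
  | cons e d p ih =>
    rw [ih, mono_step hι (hf e) d]
    rcases Int.units_eq_one_or (Γ.sign e) with hs | hs <;>
      rcases Int.units_eq_one_or p.sgn with hp | hp <;>
      simp [Walk.sgn, hs, hp, hι, units_neg_one_ne_one]

theorem count_mono {V E X : Type*} [Finite V] [Finite X] (Γ : SGraph V E)
    (ι : X → X) (hι : ∀ x, ι (ι x) = x) :
    Nat.card {f : V → X // ∀ e, Γ.Mono ι e f} =
      Nat.card X ^ Γ.kb * Nat.card {x : X // ι x = x} ^ Γ.ku := by
  classical
  have hmem : ∀ (f : V → X), (∀ e, Γ.Mono ι e f) →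
      ∀ c : Γ.Components, ¬ Γ.IsBalancedComponent c → ι (f c.out) = f c.out := by
    intro f hf c hc
    rw [IsBalancedComponent] at hc; push_neg at hc
    obtain ⟨v₀, hv₀, W, hW, hsgn⟩ := hc
    have h1 : ι (f v₀) = f v₀ := by
      have h2 := walk_mono hι hf W
      rw [if_neg hsgn] at h2
      exact h2.symm
    have hco : Γ.comp c.out = Γ.comp v₀ := (Quot.out_eq c).trans hv₀.symm
    obtain ⟨Pw⟩ := nonempty_walk_of_comp_eq hco
    have h2 := walk_mono hι hf Pw
    by_cases hp : Pw.sgn = 1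
    · rw [if_pos hp] at h2; rw [← h2]; exact h1
    · rw [if_neg hp] at h2
      have h3 := h1
      rw [h2, hι] at h3
      exact h3.symm
  set Pred : (Γ.Components → X) → Prop :=
    fun g => ∀ c, ¬ Γ.IsBalancedComponent c → ι (g c) = g c with hPred
  set Φ : {f : V → X // ∀ e, Γ.Mono ι e f} → {g : Γ.Components → X // Pred g} :=
    fun f => ⟨fun c => f.1 c.out, hmem f.1 f.2⟩ with hΦ
  have hbij : Function.Bijective Φ := by
    constructor
    · intro f g hfg
      apply Subtype.ext; funext v
      obtain ⟨Pw⟩ := nonempty_walk_of_comp_eq (Quot.out_eq (Γ.comp v))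
      have h1 := walk_mono hι f.2 Pw
      have h2 := walk_mono hι g.2 Pw
      have hv : f.1 (Γ.comp v).out = g.1 (Γ.comp v).out :=
        congrFun (congrArg Subtype.val hfg) (Γ.comp v)
      rw [h1, h2, hv]
    · intro g
      have hwch : ∀ v : V, Nonempty (Γ.Walk (Γ.comp v).out v) :=
        fun v => nonempty_walk_of_comp_eq (Quot.out_eq _)
      set f : V → X := fun v =>
        if (hwch v).some.sgn = 1 then g.1 (Γ.comp v) else ι (g.1 (Γ.comp v)) with hfdef
      have hfval : ∀ e, Γ.Mono ι e f := by
        intro e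
        have hc12 : Γ.comp (Γ.ends e).1 = Γ.comp (Γ.ends e).2 := Quot.sound ⟨e, Or.inl rfl⟩
        set W₁ := (hwch (Γ.ends e).1).some with hW₁
        set W₂ := (hwch (Γ.ends e).2).some with hW₂
        have hf1 : f (Γ.ends e).1 = if W₁.sgn = 1
            then g.1 (Γ.comp (Γ.ends e).1) else ι (g.1 (Γ.comp (Γ.ends e).1)) := rfl
        have hf2 : f (Γ.ends e).2 = if W₂.sgn = 1
            then g.1 (Γ.comp (Γ.ends e).1) else ι (g.1 (Γ.comp (Γ.ends e).1)) := by
          rw [hfdef]; dsimp only; rw [hc12]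
        by_cases hb : Γ.IsBalancedComponent (Γ.comp (Γ.ends e).1)
        · obtain ⟨R, hR⟩ := Walk.exists_reverse W₂
          have hout : (Γ.comp (Γ.ends e).2).out = (Γ.comp (Γ.ends e).1).out := by rw [hc12]
          have hCW : W₁.sgn * ((Γ.sign e * 1) * W₂.sgn) = 1 := by
            have hbb : Γ.IsBalancedComponent (Γ.comp ((Γ.comp (Γ.ends e).1).out)) := by
              have hq : Γ.comp ((Γ.comp (Γ.ends e).1).out) = Γ.comp (Γ.ends e).1 :=
                Quot.out_eq _
              rw [hq]; exact hb
            have h := sgn_eq_one_of_balanced hbb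
              (W₁.append ((Walk.cons e true (Walk.nil _)).append (R.copy rfl hout)))
            erw [Walk.sgn_append, Walk.sgn_append, Walk.sgn_copy, hR] at h
            simpa [Walk.sgn] using h
          rw [mul_one, ← mul_assoc] at hCW
          have hW2 : W₂.sgn = W₁.sgn * Γ.sign e := units_eq_of_mul_eq_one hCW
          rcases Int.units_eq_one_or (Γ.sign e) with hs | hs
          · refine Or.inl ⟨hs, ?_⟩
            rcases Int.units_eq_one_or W₁.sgn with h1 | h1 <;>
              rw [hf1, hf2, hW2, hs, h1] <;>
              simp [hι, units_neg_one_ne_one]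
          · refine Or.inr ⟨hs, ?_⟩
            rcases Int.units_eq_one_or W₁.sgn with h1 | h1 <;>
              rw [hf1, hf2, hW2, hs, h1] <;>
              simp [hι, units_neg_one_ne_one]
        · have hx : ι (g.1 (Γ.comp (Γ.ends e).1)) = g.1 (Γ.comp (Γ.ends e).1) := g.2 _ hb
          have hg1 : f (Γ.ends e).1 = g.1 (Γ.comp (Γ.ends e).1) := by
            rw [hf1]; split <;> simp [hx]
          have hg2 : f (Γ.ends e).2 = g.1 (Γ.comp (Γ.ends e).1) := by
            rw [hf2]; split <;> simp [hx]
          rcases Int.units_eq_one_or (Γ.sign e) with hs | hs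
          · exact Or.inl ⟨hs, by rw [hg1, hg2]⟩
          · exact Or.inr ⟨hs, by rw [hg1, hg2, hx]⟩
      refine ⟨⟨f, hfval⟩, ?_⟩
      apply Subtype.ext; funext c
      show f c.out = g.1 c
      have houtc : Γ.comp c.out = c := Quot.out_eq c
      have hfc : f c.out = if (hwch c.out).some.sgn = 1 then g.1 c else ι (g.1 c) := by
        show (if (hwch c.out).some.sgn = 1 then g.1 (Γ.comp c.out) else ι (g.1 (Γ.comp c.out)))
          = _
        exact if_congr Iff.rfl (by rw [houtc]) (by rw [houtc])
      by_cases hb : Γ.IsBalancedComponent c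
      · have hb' : Γ.IsBalancedComponent (Γ.comp c.out) := by rw [houtc]; exact hb
        have hsg : (hwch c.out).some.sgn = 1 := by
          have h := sgn_eq_one_of_balanced hb'
            (((hwch c.out).some).copy (congrArg Quot.out houtc) rfl)
          rwa [Walk.sgn_copy] at h
        rw [hfc, if_pos hsg]
      · rw [hfc]
        split <;> simp [g.2 c hb]
  rw [Nat.card_eq_of_bijective Φ hbij]
  letI : Fintype Γ.Components := Fintype.ofFinite _
  have h1 : Nat.card {g : Γ.Components → X // Pred g}
      = ∏ c : Γ.Components, Nat.card {x : X // ¬ Γ.IsBalancedComponent c → ι x = x} := by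
    rw [Nat.card_congr
      (Equiv.subtypePiEquivPi (p := fun c x => ¬ Γ.IsBalancedComponent c → ι x = x)),
      Nat.card_pi]
  have h2 : ∀ c : Γ.Components, Nat.card {x : X // ¬ Γ.IsBalancedComponent c → ι x = x}
      = if Γ.IsBalancedComponent c then Nat.card X else Nat.card {x : X // ι x = x} := by
    intro c
    by_cases hb : Γ.IsBalancedComponent c
    · rw [if_pos hb, Nat.card_congr (Equiv.subtypeUnivEquiv (fun x h => absurd hb h))]
    · rw [if_neg hb,
        Nat.card_congr (Equiv.subtypeEquivRight (fun x => ⟨fun h => h hb, fun h _ => h⟩))]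
  rw [h1]
  simp_rw [h2]
  rw [Finset.prod_ite, Finset.prod_const, Finset.prod_const]
  congr 1
  · congr 1
    rw [kb, Nat.card_eq_fintype_card, Fintype.card_subtype]
  · congr 1
    rw [ku, Nat.card_eq_fintype_card, Fintype.card_subtype]

end SGraph
namespace SGraph
variable {V E : Type*}

@[simp] theorem deleteEdge_endpt (Γ : SGraph V E) (e₀ : E) (e : {e' : E // e' ≠ e₀}) (d : Bool) :
    (Γ.deleteEdge e₀).endpt e d = Γ.endpt e.1 d := rfl

@[simp] theorem deleteEdge_sign (Γ : SGraph V E) (e₀ : E) (e : {e' : E // e' ≠ e₀}) :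
    (Γ.deleteEdge e₀).sign e = Γ.sign e.1 := rfl

def liftWalk (Γ : SGraph V E) (e₀ : E) : ∀ {a b : V} (W : Γ.Walk a b),
    (∀ e ∈ W.edges, e ≠ e₀) → (Γ.deleteEdge e₀).Walk a b
  | _, _, .nil v, _ => .nil v
  | _, _, .cons e d p, h => by
    have hne : e ≠ e₀ := h e (by rw [Walk.edges]; exact List.mem_cons_self)
    exact Walk.cons (Γ := Γ.deleteEdge e₀) (⟨e, hne⟩ : {e' : E // e' ≠ e₀}) d
      (Γ.liftWalk e₀ p (fun e' he' => h e' (by rw [Walk.edges]; exact List.mem_cons_of_mem _ he')))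

theorem verts_liftWalk (Γ : SGraph V E) (e₀ : E) : ∀ {a b : V} (W : Γ.Walk a b)
    (h : ∀ e ∈ W.edges, e ≠ e₀), (Γ.liftWalk e₀ W h).verts = W.verts
  | _, _, .nil v, _ => rfl
  | _, _, .cons e d p, h => by
    simp only [liftWalk, Walk.verts, deleteEdge_endpt]
    erw [verts_liftWalk Γ e₀ p]

theorem sgn_liftWalk (Γ : SGraph V E) (e₀ : E) : ∀ {a b : V} (W : Γ.Walk a b)
    (h : ∀ e ∈ W.edges, e ≠ e₀), (Γ.liftWalk e₀ W h).sgn = W.sgn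
  | _, _, .nil v, _ => rfl
  | _, _, .cons e d p, h => by
    simp only [liftWalk, Walk.sgn, deleteEdge_sign]
    erw [sgn_liftWalk Γ e₀ p]

theorem edges_liftWalk (Γ : SGraph V E) (e₀ : E) : ∀ {a b : V} (W : Γ.Walk a b)
    (h : ∀ e ∈ W.edges, e ≠ e₀),
    ((Γ.liftWalk e₀ W h).edges).map Subtype.val = W.edges
  | _, _, .nil v, _ => rfl
  | _, _, .cons e d p, h => by
    simp only [liftWalk, Walk.edges, List.map_cons]
    erw [edges_liftWalk Γ e₀ p]

theorem isCycle_liftWalk (Γ : SGraph V E) (e₀ : E) {v : V} (W : Γ.Walk v v)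
    (hC : Γ.IsCycle W) (h : ∀ e ∈ W.edges, e ≠ e₀) :
    (Γ.deleteEdge e₀).IsCycle (Γ.liftWalk e₀ W h) := by
  obtain ⟨h1, h2, h3⟩ := hC
  refine ⟨?_, ?_, ?_⟩
  · intro h0
    apply h1
    rw [← edges_liftWalk Γ e₀ W h, h0]
    rfl
  · rw [Walk.srcs, verts_liftWalk]; exact h2
  · exact List.Nodup.of_map Subtype.val (by rw [edges_liftWalk]; exact h3)

theorem cycle_mem_e0 (Γ : SGraph V E) (e₀ : E) {w : V} (C : Γ.Walk w w) (hC : Γ.IsCycle C)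
    (he : e₀ ∈ C.edges) :
    (Γ.deleteEdge e₀).comp w = (Γ.deleteEdge e₀).comp (Γ.ends e₀).1 ∧
      (Γ.deleteEdge e₀).comp (Γ.ends e₀).1 = (Γ.deleteEdge e₀).comp (Γ.ends e₀).2 := by
  rw [Walk.edges_eq_steps] at he
  obtain ⟨s, hs, hs1⟩ := List.mem_map.1 he
  obtain ⟨l₁, l₂, hsteps⟩ := List.append_of_mem hs
  obtain ⟨e', d⟩ := s
  simp only at hs1
  rw [hs1] at hsteps
  have hnd := hC.2.2
  rw [Walk.edges_eq_steps, hsteps, List.map_append, List.map_cons] at hnd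
  have hmid := List.nodup_middle.1 hnd
  have hnotin : e₀ ∉ List.map Prod.fst l₁ ++ List.map Prod.fst l₂ :=
    (List.nodup_cons.1 hmid).1
  obtain ⟨w₁, A, M, hA, hM⟩ := C.split_steps l₁ _ hsteps
  cases M with
  | nil => simp [Walk.steps] at hM
  | cons e'' d'' p =>
    rw [Walk.steps] at hM
    injection hM with h1 h2
    injection h1 with h1a h1b
    have h1a' := h1a.symm; subst h1a'
    have h1b' := h1b.symm; subst h1b'
    have hA' : ∀ e ∈ A.edges, e ≠ e₀ := by
      intro e heA h0
      rw [Walk.edges_eq_steps, hA] at heA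
      rw [h0] at heA
      exact hnotin (List.mem_append_left _ heA)
    have hp' : ∀ e ∈ p.edges, e ≠ e₀ := by
      intro e heA h0
      rw [Walk.edges_eq_steps, h2] at heA
      rw [h0] at heA
      exact hnotin (List.mem_append_right _ heA)
    have c1 : (Γ.deleteEdge e₀).comp w = (Γ.deleteEdge e₀).comp (Γ.endpt e₀ d) :=
      comp_eq_of_walk (Γ.liftWalk e₀ A hA')
    have c2 : (Γ.deleteEdge e₀).comp (Γ.endpt e₀ (!d)) = (Γ.deleteEdge e₀).comp w :=
      comp_eq_of_walk (Γ.liftWalk e₀ p hp')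
    cases d
    · exact ⟨c2.symm, c2.trans c1⟩
    · exact ⟨c1, c1.symm.trans c2.symm⟩

def compMap (Γ : SGraph V E) (e₀ : E) : (Γ.deleteEdge e₀).Components → Γ.Components :=
  Quot.lift Γ.comp (fun a b hab => Quot.sound (by
    obtain ⟨e, he⟩ := hab
    exact ⟨e.1, he⟩))

theorem compMap_comp (Γ : SGraph V E) (e₀ : E) (v : V) :
    Γ.compMap e₀ ((Γ.deleteEdge e₀).comp v) = Γ.comp v := rfl

theorem delete_comp_cases (Γ : SGraph V E) (e₀ : E) {x y : V} (h : Γ.comp x = Γ.comp y) :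
    (Γ.deleteEdge e₀).comp x = (Γ.deleteEdge e₀).comp y ∨
      (((Γ.deleteEdge e₀).comp x = (Γ.deleteEdge e₀).comp (Γ.ends e₀).1 ∨
        (Γ.deleteEdge e₀).comp x = (Γ.deleteEdge e₀).comp (Γ.ends e₀).2) ∧
       ((Γ.deleteEdge e₀).comp y = (Γ.deleteEdge e₀).comp (Γ.ends e₀).1 ∨
        (Γ.deleteEdge e₀).comp y = (Γ.deleteEdge e₀).comp (Γ.ends e₀).2)) := by
  rw [comp, comp] at h
  replace h := Quot.eq.1 h
  induction h with
  | rel a b hab =>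
    obtain ⟨e, he | he⟩ := hab
    · by_cases he0 : e = e₀
      · subst he0
        exact Or.inr ⟨Or.inl (by rw [he]), Or.inr (by rw [he])⟩
      · exact Or.inl (Quot.sound ⟨⟨e, he0⟩, Or.inl he⟩)
    · by_cases he0 : e = e₀
      · subst he0
        exact Or.inr ⟨Or.inr (by rw [he]), Or.inl (by rw [he])⟩
      · exact Or.inl (Quot.sound ⟨⟨e, he0⟩, Or.inr he⟩)
  | refl a => exact Or.inl rfl
  | symm a b _ ih =>
    rcases ih with h | ⟨h1, h2⟩
    · exact Or.inl h.symm
    · exact Or.inr ⟨h2, h1⟩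
  | trans a b c _ _ ih1 ih2 =>
    rcases ih1 with h1 | ⟨ha, hb⟩ <;> rcases ih2 with h2 | ⟨hb', hc⟩
    · exact Or.inl (h1.trans h2)
    · exact Or.inr ⟨by rw [h1]; exact hb', hc⟩
    · exact Or.inr ⟨ha, by rw [← h2]; exact hb⟩
    · exact Or.inr ⟨ha, hc⟩

theorem kb_delete [Finite V] (Γ : SGraph V E) (e₀ : E) :
    (Γ.deleteEdge e₀).kb ≤ Γ.kb + 1 := by
  classical
  set c₁ := (Γ.deleteEdge e₀).comp (Γ.ends e₀).1 with hc₁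
  set c₂ := (Γ.deleteEdge e₀).comp (Γ.ends e₀).2 with hc₂
  set cstar : (Γ.deleteEdge e₀).Components :=
    if Γ.IsBalancedComponent (Γ.comp (Γ.ends e₀).1) then c₂
    else if (Γ.deleteEdge e₀).IsBalancedComponent c₁ then c₁ else c₂ with hcstar
  have hcstar_mem : cstar = c₁ ∨ cstar = c₂ := by
    rw [hcstar]
    split
    · exact Or.inr rfl
    · split
      · exact Or.inl rfl
      · exact Or.inr rfl
  have hR : ∀ c c' : (Γ.deleteEdge e₀).Components, Γ.compMap e₀ c = Γ.compMap e₀ c' →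
      c = c' ∨ ((c = c₁ ∨ c = c₂) ∧ (c' = c₁ ∨ c' = c₂)) := by
    intro c c'
    induction c using Quot.ind with | _ x => ?_
    induction c' using Quot.ind with | _ y => ?_
    intro h
    exact delete_comp_cases Γ e₀ h
  have hkey : ∀ c : (Γ.deleteEdge e₀).Components, (Γ.deleteEdge e₀).IsBalancedComponent c →
      c ≠ cstar → Γ.IsBalancedComponent (Γ.compMap e₀ c) := by
    intro c hbal hne
    by_contra hunb
    rw [IsBalancedComponent] at hunb; push_neg at hunb
    obtain ⟨w, hw, W, hW, hsgn⟩ := hunb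
    have hcc : Γ.compMap e₀ ((Γ.deleteEdge e₀).comp w) = Γ.compMap e₀ c := by
      rw [compMap_comp, hw]
    have hrel := hR _ _ hcc
    by_cases he0 : e₀ ∈ W.edges
    · obtain ⟨hwc1, hc12⟩ := cycle_mem_e0 Γ e₀ W hW he0
      have hcpair : c = c₁ ∨ c = c₂ := by
        rcases hrel with h | ⟨h1, h2⟩
        · exact Or.inl (h.symm.trans hwc1)
        · exact h2
      have hcc1 : c = c₁ := by
        rcases hcpair with h | h
        · exact h
        · exact h.trans hc12.symm
      apply hne
      cases hcstar_mem with
      | inl h => exact hcc1.trans h.symm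
      | inr h => exact hcc1.trans (hc12.trans h.symm)
    · have hW' : ∀ e ∈ W.edges, e ≠ e₀ := fun e he h0 => he0 (h0 ▸ he)
      have hcyc' := isCycle_liftWalk Γ e₀ W hW hW'
      have hsgn' : (Γ.liftWalk e₀ W hW').sgn ≠ 1 := by
        rw [sgn_liftWalk]; exact hsgn
      have hunb' : ¬ (Γ.deleteEdge e₀).IsBalancedComponent ((Γ.deleteEdge e₀).comp w) := by
        intro hb
        exact hsgn' (hb w rfl _ hcyc')
      rcases hrel with h | ⟨h1, h2⟩
      · exact hunb' (h ▸ hbal)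
      · by_cases hb1 : Γ.IsBalancedComponent (Γ.comp (Γ.ends e₀).1)
        · have hcs : cstar = c₂ := by rw [hcstar, if_pos hb1]
          have hcc1 : c = c₁ := by
            rcases h2 with h | h
            · exact h
            · exact absurd (h.trans hcs.symm) hne
          exact hsgn (hb1 w (by rw [hw, hcc1, hc₁, compMap_comp]) W hW)
        · by_cases hbc1 : (Γ.deleteEdge e₀).IsBalancedComponent c₁
          · have hcs : cstar = c₁ := by rw [hcstar, if_neg hb1, if_pos hbc1]
            have hcc2 : c = c₂ := by
              rcases h2 with h | h
              · exact absurd (h.trans hcs.symm) hne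
              · exact h
            rcases h1 with h | h
            · exact hunb' (h ▸ hbc1)
            · exact hunb' (h ▸ (hcc2 ▸ hbal))
          · have hcs : cstar = c₂ := by rw [hcstar, if_neg hb1, if_neg hbc1]
            have hcc1 : c = c₁ := by
              rcases h2 with h | h
              · exact h
              · exact absurd (h.trans hcs.symm) hne
            exact hbc1 (hcc1 ▸ hbal)
  -- injection into balanced components of Γ plus a point
  have hinj : Function.Injective
      (fun c : {c : (Γ.deleteEdge e₀).Components // (Γ.deleteEdge e₀).IsBalancedComponent c} =>
        if h : c.1 = cstar then (Sum.inr () : {c : Γ.Components // Γ.IsBalancedComponent c} ⊕ Unit)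
        else Sum.inl ⟨Γ.compMap e₀ c.1, hkey c.1 c.2 h⟩) := by
    intro a b hab
    dsimp only at hab
    by_cases ha : a.1 = cstar <;> by_cases hb : b.1 = cstar
    · exact Subtype.ext (ha.trans hb.symm)
    · rw [dif_pos ha, dif_neg hb] at hab; exact absurd hab (by simp)
    · rw [dif_neg ha, dif_pos hb] at hab; exact absurd hab (by simp)
    · rw [dif_neg ha, dif_neg hb] at hab
      have h2 := congrArg Subtype.val (Sum.inl.inj hab)
      apply Subtype.ext
      rcases hR a.1 b.1 h2 with h3 | ⟨h3, h4⟩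
      · exact h3
      · rcases hcstar_mem with hcs | hcs
        · have h3' : a.1 = c₂ := by
            rcases h3 with h | h
            · exact absurd (h.trans hcs.symm) ha
            · exact h
          have h4' : b.1 = c₂ := by
            rcases h4 with h | h
            · exact absurd (h.trans hcs.symm) hb
            · exact h
          exact h3'.trans h4'.symm
        · have h3' : a.1 = c₁ := by
            rcases h3 with h | h
            · exact h
            · exact absurd (h.trans hcs.symm) ha
          have h4' : b.1 = c₁ := by
            rcases h4 with h | h
            · exact h
            · exact absurd (h.trans hcs.symm) hb
          exact h3'.trans h4'.symm
  have hle := Nat.card_le_card_of_injective _ hinj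
  rw [Nat.card_sum] at hle
  simpa [kb, Nat.card_unique] using hle

end SGraph
namespace SGraph
variable {V E : Type*}

theorem kAll_le_card [Finite V] (Γ : SGraph V E) : Γ.kAll ≤ Nat.card V :=
  Nat.card_le_card_of_surjective Γ.comp (fun q => Quot.exists_rep q)

theorem kAll_le_restrict [Finite V] (Γ : SGraph V E) (A : Set E) :
    Γ.kAll ≤ (Γ.restrict A).kAll := by
  have hwd : ∀ a b : V, (Γ.restrict A).Adj a b → Γ.comp a = Γ.comp b := by
    intro a b ⟨e, he⟩
    exact Quot.sound ⟨e.1, he⟩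
  exact Nat.card_le_card_of_surjective
    (Quot.lift Γ.comp hwd)
    (fun c => by
      induction c using Quot.ind with | _ v => exact ⟨Quot.mk _ v, rfl⟩)

theorem kb_add_ku [Finite V] (Γ : SGraph V E) : Γ.kb + Γ.ku = Γ.kAll := by
  classical
  letI := Fintype.ofFinite Γ.Components
  rw [kb, ku, kAll, Nat.card_eq_fintype_card, Nat.card_eq_fintype_card,
    Nat.card_eq_fintype_card, Fintype.card_subtype, Fintype.card_subtype]
  exact Finset.card_filter_add_card_filter_not _

theorem card_le_card_add_kb {V : Type} [Finite V] :
    ∀ (n : ℕ) (E : Type) [Finite E] (Γ : SGraph V E), Nat.card E ≤ n →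
      Nat.card V ≤ Nat.card E + Γ.kb := by
  intro n
  induction n with
  | zero =>
    intro E hFin Γ hE
    have hE0 : Nat.card E = 0 := Nat.le_zero.1 hE
    have hempty : IsEmpty E := by
      rcases isEmpty_or_nonempty E with h | h
      · exact h
      · exact absurd hE0 (Nat.card_ne_zero.2 ⟨h, hFin⟩)
    have hinj : Function.Injective Γ.comp := by
      intro a b hab
      rw [comp, comp] at hab
      replace hab := Quot.eq.1 hab
      induction hab with
      | rel a b h => obtain ⟨e, -⟩ := h; exact isEmptyElim e
      | refl => rfl
      | symm a b _ ih => exact ih.symm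
      | trans a b c _ _ ih1 ih2 => exact ih1.trans ih2
    have hball : ∀ c, Γ.IsBalancedComponent c := by
      intro c v _ W hW
      exfalso
      rcases hW with ⟨hne, -, -⟩
      cases hEdges : W.edges with
      | nil => exact hne hEdges
      | cons e _ => exact isEmptyElim e
    have hkbV : Γ.kb = Nat.card V := by
      rw [kb]
      exact Nat.card_congr ((Equiv.subtypeUnivEquiv hball).trans
        (Equiv.ofBijective Γ.comp ⟨hinj, fun q => Quot.exists_rep q⟩).symm)
    omega
  | succ n ih =>
    intro E hFin Γ hE
    by_cases hn : Nat.card E ≤ n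
    · exact ih E Γ hn
    · have hcard : Nat.card E = n + 1 := le_antisymm hE (not_le.1 hn)
      have hne : Nonempty E := by
        rcases isEmpty_or_nonempty E with h | h
        · rw [Nat.card_of_isEmpty] at hcard; omega
        · exact h
      obtain ⟨e₀⟩ := hne
      have hE' : Nat.card {e : E // e ≠ e₀} = n := by
        letI := Fintype.ofFinite E
        have h1 : Fintype.card {e : E // ¬ e = e₀} = Fintype.card E - Fintype.card {e : E // e = e₀} :=
          Fintype.card_subtype_compl _
        rw [Nat.card_eq_fintype_card]
        rw [Nat.card_eq_fintype_card] at hcard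
        have h2 : Fintype.card {e : E // e = e₀} = 1 := Fintype.card_subtype_eq e₀
        have h3 : Fintype.card {e : E // e ≠ e₀} = Fintype.card {e : E // ¬ e = e₀} := rfl
        omega
      have hkb := kb_delete Γ e₀
      have hIH := ih {e : E // e ≠ e₀} (Γ.deleteEdge e₀) (le_of_eq hE')
      rw [hE'] at hIH
      omega

end SGraph
section Statement

open SGraph

theorem my_sign_helper : ∀ p q : ℕ, (p + q) % 2 = 0 → (-1:ℚ)^p = (-1:ℚ)^q := by
  intro p q hpq
  have h1 : (-1:ℚ)^(p+q) = 1 := by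
    obtain ⟨m, hm⟩ : ∃ m, p + q = 2*m := ⟨(p+q)/2, by omega⟩
    rw [hm, pow_mul]; norm_num
  have h2 : (-1:ℚ)^p * (-1)^q = 1 := by rw [← pow_add]; exact h1
  have h3 : (-1:ℚ)^q * (-1)^q = 1 := by
    rw [← pow_add]
    obtain ⟨m, hm⟩ : ∃ m, q + q = 2*m := ⟨q, by omega⟩
    rw [hm, pow_mul]; norm_num
  calc (-1:ℚ)^p = (-1)^p * ((-1)^q * (-1)^q) := by rw [h3, mul_one]
    _ = ((-1)^p * (-1)^q) * (-1)^q := by ring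
    _ = (-1)^q := by rw [h2, one_mul]

/-- Theorem 6.5: the number of proper `(X,ι)`-colorings of a signed graph. -/
theorem card_proper_inv_colorings (V E : Type) [Finite V] [Finite E]
    (Γ : SGraph V E) (X : Type) [Finite X] [Nonempty X]
    (ι : X → X) (hι : ∀ x, ι (ι x) = x) :
    (Nat.card {f : V → X // Γ.IsProperInvColoring ι f} : ℚ) =
      (-1 : ℚ) ^ (Nat.card V - Γ.kAll) * (Nat.card X : ℚ) ^ Γ.kAll *
        Γ.signedTutte (1 - (Nat.card X : ℚ)) 0
          (1 - (Nat.card {x : X // ι x = x} : ℚ) / (Nat.card X : ℚ)) := by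
  classical
  letI : Fintype V := Fintype.ofFinite V
  letI : Fintype E := Fintype.ofFinite E
  letI : Fintype X := Fintype.ofFinite X
  set n : ℚ := (Nat.card X : ℚ) with hn
  set t : ℚ := (Nat.card {x : X // ι x = x} : ℚ) with ht
  have hn0 : (0:ℚ) < n := by
    rw [hn]
    exact_mod_cast Nat.card_pos
  -- counting monochromatic-on-A colorings
  have count : ∀ A : Finset E, (Nat.card {f : V → X // ∀ e ∈ A, Γ.Mono ι e f} : ℚ)
      = n ^ (Γ.restrict (A : Set E)).kb * t ^ (Γ.restrict (A : Set E)).ku := by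
    intro A
    have hcongr : Nat.card {f : V → X // ∀ e ∈ A, Γ.Mono ι e f}
        = Nat.card {f : V → X // ∀ e : (A : Set E), (Γ.restrict (A : Set E)).Mono ι e f} := by
      apply Nat.card_congr
      apply Equiv.subtypeEquivRight
      intro f
      constructor
      · intro h e
        exact h e.1 e.2
      · intro h e he
        exact h ⟨e, he⟩
    rw [hcongr, count_mono (Γ.restrict (A : Set E)) ι hι]
    push_cast
    rfl
  -- card as a Boolean sum
  have hcard : ∀ (p : (V → X) → Prop), (Nat.card {f : V → X // p f} : ℚ)
      = ∑ f : V → X, (if p f then (1:ℚ) else 0) := by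
    intro p
    rw [Nat.card_eq_fintype_card, Fintype.card_subtype, Finset.sum_boole]
  -- proper iff no mono edge
  have hproper : ∀ f : V → X, Γ.IsProperInvColoring ι f ↔ ∀ e, ¬ Γ.Mono ι e f := by
    intro f
    constructor
    · intro h e hm
      obtain ⟨h1, h2⟩ := h e
      rcases hm with ⟨hs, heq⟩ | ⟨hs, heq⟩
      · exact h1 hs heq
      · exact h2 hs heq
    · intro h e
      have := h e
      rw [Mono, not_or, not_and, not_and] at this
      exact ⟨this.1, this.2⟩
  -- inclusion-exclusion
  have lhs_eq : (Nat.card {f : V → X // Γ.IsProperInvColoring ι f} : ℚ)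
      = ∑ A : Finset E, (-1:ℚ)^A.card *
          (Nat.card {f : V → X // ∀ e ∈ A, Γ.Mono ι e f} : ℚ) := by
    rw [hcard]
    have step : ∀ f : V → X, (if Γ.IsProperInvColoring ι f then (1:ℚ) else 0)
        = ∑ A : Finset E, (if ∀ e ∈ A, Γ.Mono ι e f then (-1:ℚ)^A.card else 0) := by
      intro f
      set Bad : Finset E := Finset.univ.filter (fun e => Γ.Mono ι e f) with hBad
      have hiff : ∀ A : Finset E, (∀ e ∈ A, Γ.Mono ι e f) ↔ A ∈ Bad.powerset := by
        intro A
        rw [Finset.mem_powerset]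
        constructor
        · intro h e he
          rw [hBad, Finset.mem_filter]
          exact ⟨Finset.mem_univ _, h e he⟩
        · intro h e he
          have := h he
          rw [hBad, Finset.mem_filter] at this
          exact this.2
      have h1 : ∑ A : Finset E, (if ∀ e ∈ A, Γ.Mono ι e f then (-1:ℚ)^A.card else 0)
          = ∑ A ∈ Bad.powerset, (-1:ℚ)^A.card := by
        rw [← Finset.sum_filter]
        apply Finset.sum_congr
        · ext A
          simp [hiff A]
        · intro A _; rfl
      rw [h1]
      have h2 : ∑ A ∈ Bad.powerset, (-1:ℚ)^A.card
          = if Bad = ∅ then 1 else 0 := by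
        have := Finset.sum_powerset_neg_one_pow_card (x := Bad)
        have hcast := congrArg (fun z : ℤ => (z : ℚ)) this
        push_cast at hcast
        exact hcast
      rw [h2]
      congr 1
      rw [eq_iff_iff, hproper f, hBad, Finset.filter_eq_empty_iff]
      simp
    simp_rw [step]
    rw [Finset.sum_comm]
    apply Finset.sum_congr rfl
    intro A _
    rw [hcard, Finset.mul_sum]
    apply Finset.sum_congr rfl
    intro f _
    split <;> simp
  rw [lhs_eq, signedTutte, finsum_eq_sum_of_fintype, Finset.mul_sum]
  apply Finset.sum_congr rfl
  intro A _
  rw [count A]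
  -- algebra per A
  set kA := (Γ.restrict (A : Set E)).kAll with hkA
  set kb' := (Γ.restrict (A : Set E)).kb with hkb'
  set ku' := (Γ.restrict (A : Set E)).ku with hku'
  set k := Γ.kAll with hk
  set vV := Nat.card V with hvV
  have h1 : k ≤ kA := kAll_le_restrict Γ (A : Set E)
  have h3 : kA ≤ vV := kAll_le_card _
  have h5 : kb' + ku' = kA := kb_add_ku _
  have h2 : vV ≤ A.card + kb' := by
    have hc := card_le_card_add_kb (V := V) (Nat.card (A : Set E)) (A : Set E)
      (Γ.restrict (A : Set E)) le_rfl
    have hAc : Nat.card (A : Set E) = A.card := by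
      rw [Nat.card_coe_set_eq, Set.ncard_coe_finset]
    rw [hAc] at hc
    exact hc
  obtain ⟨d1, hd1⟩ : ∃ d1, kA = k + d1 := ⟨kA - k, by omega⟩
  obtain ⟨d2, hd2⟩ : ∃ d2, vV = k + d2 := ⟨vV - k, by omega⟩
  obtain ⟨d3, hd3⟩ : ∃ d3, A.card + kb' = vV + d3 := ⟨A.card + kb' - vV, by omega⟩
  have he1 : kA - k = d1 := by omega
  have he2 : vV - k = d2 := by omega
  have he3 : A.card + kb' - vV = d3 := by omega
  rw [he1, he2, he3]
  have hxx : (1 - n - 1 : ℚ) = -n := by ring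
  have hyy : (0 - 1 : ℚ) = -1 := by ring
  have hzz : (1 - t / n - 1 : ℚ) = -(t/n) := by ring
  rw [hxx, hyy, hzz]
  have hparity : (-1:ℚ)^A.card = (-1:ℚ)^(d2 + (d1 + (d3 + ku'))) :=
    my_sign_helper _ _ (by omega)
  have hnn : (n:ℚ) ^ kb' * n ^ ku' = n ^ k * n ^ d1 := by
    rw [← pow_add, ← pow_add, h5, hd1]
  have hne : (n:ℚ) ≠ 0 := ne_of_gt hn0
  rw [hparity, neg_pow n, neg_pow (t/n), div_pow, pow_add, pow_add, pow_add]
  field_simp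
  ring_nf
  ring_nf at hnn
  linear_combination (t^ku') * hnn

end Statement
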